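/- Let C ⊆ (F_{q^r})^n be a Galois supplemented cyclic code. Then ψ(C) equals the set of all vectors in (F_{q^r})^n each of whose coordinates has zero trace over F_q; in particular ψ(C) is an F_q-subspace of dimension (r−1)n. -/

import Mathlib

open Polynomial

/-- The polynomial of degree `< n` whose coefficient vector is the word `u`. -/
noncomputable def wordPoly {F : Type*} [Field F] {n : ℕ} (u : Fin n → F) : Polynomial F :=
  ∑ j : Fin n, Polynomial.C (u j) * Polynomial.X ^ (j : ℕ)

namespace Stmt4Aux

variable {F : Type*} [Field F] {n : ℕ}

lemma wp_coeff (u : Fin n → F) (m : ℕ) :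
    (wordPoly u).coeff m = if hm : m < n then u ⟨m, hm⟩ else 0 := by
  unfold wordPoly
  rw [Polynomial.finset_sum_coeff]
  simp only [Polynomial.coeff_C_mul, Polynomial.coeff_X_pow]
  by_cases hm : m < n
  · rw [dif_pos hm, Finset.sum_eq_single (⟨m, hm⟩ : Fin n)]
    · simp
    · intro b _ hb
      have : m ≠ (b : ℕ) := fun h => hb (Fin.ext h.symm)
      simp [this]
    · simp
  · rw [dif_neg hm]
    apply Finset.sum_eq_zero
    intro j _
    have : m ≠ (j : ℕ) := by omega
    simp [this]

lemma wp_coeff' (u : Fin n → F) (j : Fin n) : (wordPoly u).coeff (j : ℕ) = u j := by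
  rw [wp_coeff, dif_pos j.isLt]

lemma wp_degree (u : Fin n → F) : (wordPoly u).degree < (n : ℕ) := by
  have : wordPoly u ∈ degreeLT F n := by
    apply Submodule.sum_mem
    intro j _
    rw [Polynomial.mem_degreeLT, Polynomial.C_mul_X_pow_eq_monomial]
    exact lt_of_le_of_lt (Polynomial.degree_monomial_le _ _)
      (by exact_mod_cast Nat.cast_lt.mpr j.isLt)
  exact Polynomial.mem_degreeLT.mp this

lemma wp_eq (p : F[X]) (hp : p.degree < (n : ℕ)) :
    wordPoly (fun j : Fin n => p.coeff (j : ℕ)) = p := by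
  ext m
  rw [wp_coeff]
  by_cases hm : m < n
  · rw [dif_pos hm]
  · rw [dif_neg hm]
    exact (Polynomial.coeff_eq_zero_of_degree_lt
      (lt_of_lt_of_le hp (by exact_mod_cast Nat.cast_le.mpr (Nat.le_of_not_lt hm)))).symm

lemma wp_inj (u v : Fin n → F) (h : wordPoly u = wordPoly v) : u = v := by
  funext j
  rw [← wp_coeff' u j, ← wp_coeff' v j, h]

lemma wp_add (u v : Fin n → F) : wordPoly (u + v) = wordPoly u + wordPoly v := by
  unfold wordPoly
  rw [← Finset.sum_add_distrib]
  refine Finset.sum_congr rfl fun j _ => ?_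
  simp [add_mul]

lemma wp_zero : wordPoly (0 : Fin n → F) = 0 := by
  simp [wordPoly]

lemma wp_neg (u : Fin n → F) : wordPoly (-u) = -(wordPoly u) := by
  unfold wordPoly
  rw [← Finset.sum_neg_distrib]
  refine Finset.sum_congr rfl fun j _ => ?_
  simp

lemma wp_map (f : F →+* F) (u : Fin n → F) :
    wordPoly (fun j => f (u j)) = Polynomial.map f (wordPoly u) := by
  unfold wordPoly
  rw [Polynomial.map_sum]
  refine Finset.sum_congr rfl fun j _ => ?_
  simp

lemma code_equiv (h : F[X]) (h0 : h ≠ 0) (hdn : h.natDegree ≤ n) :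
    ∃ e : (Fin (n - h.natDegree) → F) ≃ {u : Fin n → F // h ∣ wordPoly u},
      ∀ w, (∀ j, (e w : Fin n → F) j = (h * wordPoly w).coeff (j : ℕ)) ∧
        wordPoly (e w : Fin n → F) = h * wordPoly w := by
  set d := h.natDegree with hd
  have hdeg : ∀ w : Fin (n - d) → F, (h * wordPoly w).degree < (n : ℕ) := by
    intro w
    rcases eq_or_ne (wordPoly w) 0 with hw | hw
    · rw [hw, mul_zero]
      exact (Polynomial.degree_zero (R := F)) ▸ WithBot.bot_lt_coe n
    · have hne : h * wordPoly w ≠ 0 := mul_ne_zero h0 hw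
      rw [← Polynomial.natDegree_lt_iff_degree_lt hne, Polynomial.natDegree_mul h0 hw]
      have := (Polynomial.natDegree_lt_iff_degree_lt hw).mpr (wp_degree w)
      omega
  have hfw : ∀ w : Fin (n - d) → F,
      wordPoly (fun j : Fin n => (h * wordPoly w).coeff (j : ℕ)) = h * wordPoly w :=
    fun w => wp_eq _ (hdeg w)
  refine ⟨Equiv.ofBijective
    (fun w => ⟨fun j => (h * wordPoly w).coeff (j : ℕ), by rw [hfw w]; exact dvd_mul_right h _⟩)
    ⟨?_, ?_⟩, fun w => ⟨fun j => rfl, hfw w⟩⟩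
  · intro w w' he
    have h1 : wordPoly (fun j : Fin n => (h * wordPoly w).coeff (j : ℕ))
        = wordPoly (fun j : Fin n => (h * wordPoly w').coeff (j : ℕ)) := by
      have := congrArg (fun z => (z : {u : Fin n → F // h ∣ wordPoly u}) : _ → Fin n → F) he
      exact congrArg wordPoly this
    rw [hfw w, hfw w'] at h1
    exact wp_inj _ _ (mul_left_cancel₀ h0 h1)
  · rintro ⟨u, p, hp⟩
    rcases eq_or_ne p 0 with hp0 | hp0
    · refine ⟨0, Subtype.ext ?_⟩
      funext j
      have : u j = (wordPoly u).coeff (j : ℕ) := (wp_coeff' u j).symm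
      simp only [this, hp, hp0, mul_zero]
      rw [show wordPoly (0 : Fin (n - d) → F) = 0 from wp_zero, mul_zero]
    · have hdp : p.degree < ((n - d : ℕ) : WithBot ℕ) := by
        have hne : h * p ≠ 0 := fun hc => hp0 (by
          rcases mul_eq_zero.mp hc with h' | h'
          · exact absurd h' h0
          · exact h')
        have h1 : (h * p).degree < (n : ℕ) := hp ▸ wp_degree u
        rw [← Polynomial.natDegree_lt_iff_degree_lt hne, Polynomial.natDegree_mul h0 hp0] at h1
        rw [← Polynomial.natDegree_lt_iff_degree_lt hp0]
        omega
      refine ⟨fun j => p.coeff (j : ℕ), Subtype.ext ?_⟩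
      funext j
      show (h * wordPoly (fun j : Fin (n - d) => p.coeff (j : ℕ))).coeff (j : ℕ) = u j
      rw [wp_eq p hdp, ← hp, wp_coeff' u j]

lemma card_image_addhom {G H : Type*} [AddCommGroup G] [AddCommGroup H] (f : G →+ H)
    (S : AddSubgroup G) :
    Nat.card (f '' (S : Set G)) * Nat.card {x : G // x ∈ S ∧ f x = 0} = Nat.card S := by
  let f' := f.domRestrict S
  have h1 : Nat.card (f '' (S : Set G)) = Nat.card f'.range := by
    apply Nat.card_congr
    apply Equiv.setCongr
    rw [AddMonoidHom.coe_range]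
    rw [Set.image_eq_range]
    rfl
  have h2 : Nat.card {x : G // x ∈ S ∧ f x = 0} = Nat.card f'.ker := by
    apply Nat.card_congr
    exact {
      toFun := fun y => ⟨⟨y.1, y.2.1⟩, by
        rw [AddMonoidHom.mem_ker, AddMonoidHom.restrict_apply]
        exact y.2.2⟩
      invFun := fun x => ⟨x.1.1, x.1.2, by
        have hx : f' x.1 = 0 := x.2
        rwa [AddMonoidHom.restrict_apply] at hx⟩
      left_inv := fun y => rfl
      right_inv := fun x => rfl }
  rw [h1, h2]
  rw [Nat.card_congr (QuotientAddGroup.quotientKerEquivRange f').toEquiv.symm]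
  exact (AddSubgroup.card_eq_card_quotient_mul_card_addSubgroup f'.ker).symm

end Stmt4Aux

namespace Stmt4Aux

lemma card_eval_zero_le {F : Type*} [Field F] (P : F[X]) (hP : P ≠ 0) (m : ℕ)
    (hdeg : P.natDegree ≤ m) : Nat.card {x : F // P.eval x = 0} ≤ m := by
  classical
  have h1 : Nat.card {x : F // P.eval x = 0} ≤ Nat.card {x // x ∈ P.roots.toFinset} := by
    refine Nat.card_le_card_of_injective (fun y => ⟨y.1, ?_⟩) ?_
    · rw [Multiset.mem_toFinset, Polynomial.mem_roots hP]
      exact y.2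
    · intro a b h
      simp only [Subtype.mk.injEq] at h
      exact Subtype.ext h
  refine h1.trans ?_
  rw [Nat.card_eq_finsetCard]
  exact le_trans (Multiset.toFinset_card_le _) (le_trans (Polynomial.card_roots' P) hdeg)

lemma arith_aux (q r n d X : ℕ) (hq2 : 2 ≤ q) (hr : 1 ≤ r) (hdn : r * d ≤ n)
    (h : X * q ^ (n - r * d) = (q ^ r) ^ (n - d)) : X = q ^ ((r - 1) * n) := by
  have hb1 : n ≤ r * n := Nat.le_mul_of_pos_left n (by omega)
  have hexp : (q : ℕ) ^ (r * (n - d)) = q ^ ((r - 1) * n) * q ^ (n - r * d) := by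
    rw [← pow_add]
    congr 1
    rw [Nat.mul_sub, Nat.sub_mul, one_mul]
    have hd : d ≤ n := le_trans (Nat.le_mul_of_pos_left d (by omega)) hdn
    omega
  rw [← pow_mul, hexp] at h
  exact Nat.eq_of_mul_eq_mul_right (Nat.pow_pos (by omega)) h

end Stmt4Aux

/-- `C ⊆ (F_{q^r})^n` is Galois supplemented: `C + C^τ = (F_{q^r})^n` for every non-trivial
`τ ∈ Gal(F_{q^r}/F_q)`; the non-trivial automorphisms are `x ↦ x^(q^i)`, `1 ≤ i < r`. -/
def GaloisSupplemented {F : Type*} [Field F] {n : ℕ} (q r : ℕ) (C : Set (Fin n → F)) : Prop :=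
  ∀ i : ℕ, 0 < i → i < r → ∀ v : Fin n → F,
    ∃ a ∈ C, ∃ b ∈ C, v = a + fun j => (b j) ^ (q ^ i)

open Stmt4Aux in
theorem stmt4 (q r n : ℕ) (hq : IsPrimePow q) (hr : 1 < r) (hn : 0 < n)
    (hcop : Nat.Coprime n q)
    (F : Type*) [Field F] [Fintype F] (hF : Fintype.card F = q ^ r)
    (g : Polynomial F) (hmonic : g.Monic) (hdvd : g ∣ (Polynomial.X ^ n - 1))
    (hsupp : GaloisSupplemented q r {u : Fin n → F | g ∣ wordPoly u}) :
    {v : Fin n → F | ∃ u : Fin n → F, g ∣ wordPoly u ∧ v = fun j => (u j) ^ q - u j} =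
      {v : Fin n → F | ∀ j, ∑ i ∈ Finset.range r, (v j) ^ (q ^ i) = 0} ∧
    {v : Fin n → F | ∃ u : Fin n → F, g ∣ wordPoly u ∧
        v = fun j => (u j) ^ q - u j}.ncard = q ^ ((r - 1) * n) := by
  have hq2 : 2 ≤ q := hq.two_le
  obtain ⟨p, k, hp', hk, hpk⟩ := hq
  have hpp : p.Prime := Nat.prime_iff.mpr hp'
  -- characteristic
  have hcard' : Fintype.card F = p ^ (k * r) := by rw [hF, ← hpk, pow_mul]
  have hcp : ringChar F = p := by
    obtain ⟨m, -, hcm⟩ := FiniteField.card F (ringChar F)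
    have hc : (ringChar F).Prime := CharP.char_is_prime F (ringChar F)
    have hdv : ringChar F ∣ p ^ (k * r) := by
      rw [← hcard', hcm]
      exact dvd_pow_self _ m.ne_zero
    exact (Nat.prime_dvd_prime_iff_eq hc hpp).mp (hc.dvd_of_dvd_pow hdv)
  haveI : CharP F p := hcp ▸ ringChar.charP F
  haveI : ExpChar F p := ExpChar.prime hpp
  -- the Frobenius powers
  set φi : ℕ → (F →+* F) := fun i => iterateFrobenius F p (k * i) with hφidef
  have hφi : ∀ (i : ℕ) (x : F), φi i x = x ^ q ^ i := by
    intro i x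
    rw [hφidef]
    rw [iterateFrobenius_def, pow_mul, hpk]
  have hcomp : ∀ i j, (φi i).comp (φi j) = φi (i + j) := by
    intro i j
    ext x
    rw [RingHom.comp_apply, hφi, hφi, hφi, ← pow_mul, ← pow_add, add_comm j i]
  have hxqr : ∀ x : F, x ^ q ^ r = x := fun x => by
    rw [← hF]; exact FiniteField.pow_card x
  have hfixpow : ∀ x : F, x ^ q = x → ∀ i, x ^ q ^ i = x := by
    intro x hx i
    induction i with
    | zero => rw [pow_zero, pow_one]
    | succ i ih => rw [pow_succ, pow_mul, ih, hx]
  -- trace of ψ vanishes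
  have hTr : ∀ x : F, ∑ i ∈ Finset.range r, (x ^ q - x) ^ q ^ i = 0 := by
    intro x
    have hterm : ∀ i, (x ^ q - x) ^ q ^ i = x ^ q ^ (i + 1) - x ^ q ^ i := by
      intro i
      rw [← hφi i (x ^ q - x), map_sub, hφi, hφi, ← pow_mul, ← pow_succ']
    rw [Finset.sum_congr rfl (fun i _ => hterm i),
      Finset.sum_range_sub (fun i => x ^ q ^ i) r, hxqr, pow_zero, pow_one, sub_self]
  -- the scalar map ψ
  set ψs : F →+ F := (φi 1).toAddMonoidHom - AddMonoidHom.id F with hψdef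
  have hψs : ∀ x, ψs x = x ^ q - x := by
    intro x
    rw [hψdef]
    simp [hφi, pow_one]
  -- cardinality bounds
  have cardK_le : Nat.card {x : F // x ^ q = x} ≤ q := by
    have hne : (X ^ q - X : F[X]) ≠ 0 := by
      intro h
      have h2 : ((X : F[X]) ^ q - X).coeff q = 1 := by
        rw [Polynomial.coeff_sub, Polynomial.coeff_X_pow, Polynomial.coeff_X]
        have : ¬ (1 = q) := by omega
        simp [this]
      rw [h, Polynomial.coeff_zero] at h2
      exact one_ne_zero h2.symm
    have hdeg : (X ^ q - X : F[X]).natDegree ≤ q := by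
      refine le_trans (Polynomial.natDegree_sub_le _ _) ?_
      simp only [Polynomial.natDegree_X_pow, Polynomial.natDegree_X]
      omega
    have := card_eval_zero_le (X ^ q - X : F[X]) hne q hdeg
    refine le_trans (le_of_eq (Nat.card_congr (Equiv.subtypeEquivRight ?_))) this
    intro x
    simp [sub_eq_zero, eq_comm]
  have cardTr_le : Nat.card {x : F // ∑ i ∈ Finset.range r, x ^ q ^ i = 0} ≤ q ^ (r - 1) := by
    set P : F[X] := ∑ i ∈ Finset.range r, X ^ q ^ i with hPdef
    have hPeval : ∀ x : F, P.eval x = ∑ i ∈ Finset.range r, x ^ q ^ i := by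
      intro x
      rw [hPdef, Polynomial.eval_finset_sum]
      simp
    have hPne : P ≠ 0 := by
      have hco : P.coeff (q ^ (r - 1)) = 1 := by
        rw [hPdef, Polynomial.finset_sum_coeff]
        rw [Finset.sum_eq_single (r - 1)]
        · simp [Polynomial.coeff_X_pow]
        · intro i hi hne
          rw [Polynomial.coeff_X_pow]
          have : ¬ (q ^ (r - 1) = q ^ i) := fun h =>
            hne ((Nat.pow_right_injective hq2 h).symm)
          simp [this]
        · intro h
          exact absurd (Finset.mem_range.mpr (by omega)) h
      intro h
      rw [h, Polynomial.coeff_zero] at hco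
      exact one_ne_zero hco.symm
    have hPdeg : P.natDegree ≤ q ^ (r - 1) := by
      refine Polynomial.natDegree_sum_le_of_forall_le _ _ (fun i hi => ?_)
      rw [Polynomial.natDegree_X_pow]
      exact Nat.pow_le_pow_right (by omega) (by rw [Finset.mem_range] at hi; omega)
    have := card_eval_zero_le P hPne _ hPdeg
    refine le_trans (le_of_eq (Nat.card_congr (Equiv.subtypeEquivRight ?_))) this
    intro x
    rw [hPeval]
  -- scalar counting
  have hKA : Nat.card ↥(Set.range fun x : F => x ^ q - x) * Nat.card {x : F // x ^ q = x}
      = q ^ r := by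
    have h0 := card_image_addhom ψs (⊤ : AddSubgroup F)
    have e1 : ψs '' ((⊤ : AddSubgroup F) : Set F) = Set.range fun x : F => x ^ q - x := by
      rw [AddSubgroup.coe_top, Set.image_univ]
      exact congrArg Set.range (funext hψs)
    have e2 : Nat.card {x : F // x ∈ (⊤ : AddSubgroup F) ∧ ψs x = 0}
        = Nat.card {x : F // x ^ q = x} := by
      refine Nat.card_congr (Equiv.subtypeEquivRight ?_)
      intro x
      simp [hψs, sub_eq_zero]
    have e3 : Nat.card ↥(⊤ : AddSubgroup F) = q ^ r := by
      rw [Nat.card_congr AddSubgroup.topEquiv.toEquiv, Nat.card_eq_fintype_card, hF]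
    rw [e1, e2, e3] at h0
    exact h0
  have hrange_le : Nat.card ↥(Set.range fun x : F => x ^ q - x)
      ≤ Nat.card {x : F // ∑ i ∈ Finset.range r, x ^ q ^ i = 0} := by
    refine Nat.card_le_card_of_injective (fun y => ⟨y.1, ?_⟩) ?_
    · obtain ⟨x, hx⟩ := y.2
      rw [← hx]
      exact hTr x
    · intro a b h
      simp only [Subtype.mk.injEq] at h
      exact Subtype.ext h
  have hA : Nat.card ↥(Set.range fun x : F => x ^ q - x) = q ^ (r - 1) := by
    refine le_antisymm (hrange_le.trans cardTr_le) ?_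
    have h1 : q ^ r ≤ Nat.card ↥(Set.range fun x : F => x ^ q - x) * q := by
      rw [← hKA]
      exact Nat.mul_le_mul_left _ cardK_le
    have h2 : q ^ (r - 1) * q = q ^ r := by
      rw [← pow_succ]
      congr 1
      omega
    exact Nat.le_of_mul_le_mul_right (h2 ▸ h1) (by omega)
  have cardTr : Nat.card {x : F // ∑ i ∈ Finset.range r, x ^ q ^ i = 0} = q ^ (r - 1) :=
    le_antisymm cardTr_le (hA ▸ hrange_le)
  have cardK : Nat.card {x : F // x ^ q = x} = q := by
    rw [hA] at hKA
    have h2 : q ^ (r - 1) * q = q ^ r := by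
      rw [← pow_succ]
      congr 1
      omega
    exact Nat.eq_of_mul_eq_mul_left (Nat.pow_pos (by omega)) (hKA.trans h2.symm)
  -- conjugate generators
  have hg0 : g ≠ 0 := hmonic.ne_zero
  set gi : ℕ → F[X] := fun i => Polynomial.map (φi i) g with hgidef
  have hgine : ∀ i, gi i ≠ 0 := fun i => Polynomial.map_ne_zero hg0
  have hXn : (X ^ n - 1 : F[X]) ≠ 0 := by
    have := Polynomial.X_pow_sub_C_ne_zero (R := F) hn 1
    rwa [map_one] at this
  have hmapXn : ∀ i, Polynomial.map (φi i) (X ^ n - 1 : F[X]) = X ^ n - 1 := by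
    intro i
    rw [Polynomial.map_sub, Polynomial.map_pow, Polynomial.map_X, Polynomial.map_one]
  have hgidvd : ∀ i, gi i ∣ X ^ n - 1 := fun i => (hmapXn i) ▸ Polynomial.map_dvd (φi i) hdvd
  have hgi0 : gi 0 = g := by
    have h0 : φi 0 = RingHom.id F := by
      ext x
      rw [hφi, pow_zero, pow_one, RingHom.id_apply]
    rw [hgidef]
    simp [h0]
  have hgir : gi r = g := by
    have h0 : φi r = RingHom.id F := by
      ext x
      rw [hφi, RingHom.id_apply]
      exact hxqr x
    rw [hgidef]
    simp [h0]
  have hcop1 : ∀ i, 0 < i → i < r → IsCoprime g (gi i) := by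
    intro i h1 h2
    obtain ⟨a, ha, b, hb, hv⟩ := hsupp i h1 h2 (fun j : Fin n => if (j : ℕ) = 0 then (1 : F) else 0)
    have hv1 : wordPoly (fun j : Fin n => if (j : ℕ) = 0 then (1 : F) else 0) = 1 := by
      unfold wordPoly
      rw [Finset.sum_eq_single (⟨0, hn⟩ : Fin n)]
      · simp
      · intro j _ hj
        have : (j : ℕ) ≠ 0 := fun h => hj (Fin.ext h)
        simp [this]
      · simp
    have heq : (1 : F[X]) = wordPoly a + Polynomial.map (φi i) (wordPoly b) := by
      rw [← hv1, hv, wp_add]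
      congr 1
      rw [← wp_map]
      congr 1
      funext j
      rw [hφi]
    obtain ⟨A, hA⟩ := ha
    obtain ⟨B, hB⟩ := Polynomial.map_dvd (φi i) hb
    refine ⟨A, B, ?_⟩
    rw [mul_comm A g, mul_comm B (gi i), ← hA, ← hB]
    exact heq.symm
  have hpair : (↑(Finset.range r) : Set ℕ).Pairwise (Function.onFun IsCoprime gi) := by
    have key : ∀ i j, i < j → j < r → IsCoprime (gi i) (gi j) := by
      intro i j hij hjr
      have h1 : IsCoprime g (gi (j - i)) := hcop1 (j - i) (by omega) (by omega)
      have h2 := h1.map (Polynomial.mapRingHom (φi i))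
      rw [Polynomial.coe_mapRingHom] at h2
      have h3 : Polynomial.map (φi i) (gi (j - i)) = gi j := by
        rw [hgidef]
        simp only []
        rw [Polynomial.map_map, hcomp]
        congr 2
        omega
      rwa [h3] at h2
    intro i hi j hj hij
    simp only [Finset.coe_range, Set.mem_Iio] at hi hj
    rcases lt_or_gt_of_ne hij with h | h
    · exact key i j h hj
    · exact (key j i h hi).symm
  have hGdvd : (∏ i ∈ Finset.range r, gi i) ∣ X ^ n - 1 :=
    Finset.prod_dvd_of_coprime hpair (fun i _ => hgidvd i)
  set G := ∏ i ∈ Finset.range r, gi i with hGdef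
  have hGne : G ≠ 0 := Finset.prod_ne_zero_iff.mpr (fun i _ => hgine i)
  have hgG : g ∣ G := hgi0 ▸ Finset.dvd_prod_of_mem gi (Finset.mem_range.mpr (by omega))
  have hdG : G.natDegree = r * g.natDegree := by
    rw [hGdef, Polynomial.natDegree_prod _ _ (fun i _ => hgine i)]
    rw [Finset.sum_congr rfl (fun i (_ : i ∈ Finset.range r) => Polynomial.natDegree_map (φi i))]
    rw [Finset.sum_const, Finset.card_range, smul_eq_mul]
  have hdGn : r * g.natDegree ≤ n := by
    have h1 := Polynomial.natDegree_le_of_dvd hGdvd hXn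
    rw [hdG] at h1
    have hXdeg : (X ^ n - 1 : F[X]).natDegree = n := by
      have h2 := Polynomial.natDegree_X_pow_sub_C (R := F) (n := n) (r := 1)
      rwa [map_one] at h2
    rw [hXdeg] at h1
    exact h1
  have hdgn : g.natDegree ≤ n := le_trans (Nat.le_mul_of_pos_left _ (by omega)) hdGn
  have hGfix : Polynomial.map (φi 1) G = G := by
    rw [hGdef, Polynomial.map_prod]
    have hstep : ∀ i, Polynomial.map (φi 1) (gi i) = gi (i + 1) := by
      intro i
      rw [hgidef]
      simp only []
      rw [Polynomial.map_map, hcomp]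
      congr 2
      omega
    rw [Finset.prod_congr rfl (fun i _ => hstep i)]
    have h1 : ∏ i ∈ Finset.range r, gi (i + 1) = ∏ i ∈ Finset.Ico 1 (r + 1), gi i := by
      rw [Finset.prod_Ico_eq_prod_range]
      simp [add_comm]
    rw [h1, Finset.prod_Ico_succ_top (by omega : 1 ≤ r), hgir]
    conv_rhs => rw [Finset.range_eq_Ico, Finset.prod_eq_prod_Ico_succ_bot (by omega : 0 < r) gi, hgi0]
    rw [mul_comm]
  have hfixword : ∀ (m : ℕ) (u : Fin m → F), (∀ j, (u j) ^ q = u j) →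
      Polynomial.map (φi 1) (wordPoly u) = wordPoly u := by
    intro m u hu
    rw [← wp_map]
    congr 1
    funext j
    rw [hφi, pow_one, hu j]
  have hGdvdIff : ∀ u : Fin n → F, (∀ j, (u j) ^ q = u j) →
      (g ∣ wordPoly u ↔ G ∣ wordPoly u) := by
    intro u hu
    constructor
    · intro hgu
      refine Finset.prod_dvd_of_coprime hpair (fun i _ => ?_)
      have h1 : gi i ∣ Polynomial.map (φi i) (wordPoly u) := Polynomial.map_dvd (φi i) hgu
      rwa [← wp_map,
        show (fun j => φi i (u j)) = u from
          funext (fun j => by rw [hφi]; exact hfixpow (u j) (hu j) i)] at h1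
    · exact fun h => hgG.trans h
  -- cardinality of the code
  obtain ⟨e, he⟩ := code_equiv g hg0 hdgn
  have cardC : Nat.card {u : Fin n → F // g ∣ wordPoly u} = (q ^ r) ^ (n - g.natDegree) := by
    calc Nat.card {u : Fin n → F // g ∣ wordPoly u}
        = Nat.card (Fin (n - g.natDegree) → F) := (Nat.card_congr e).symm
      _ = Nat.card F ^ (n - g.natDegree) := by
          rw [Nat.card_fun, Nat.card_eq_fintype_card (α := Fin (n - g.natDegree)),
            Fintype.card_fin]
      _ = (q ^ r) ^ (n - g.natDegree) := by rw [Nat.card_eq_fintype_card, hF]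
  obtain ⟨eG, heG⟩ := code_equiv (n := n) G hGne (le_trans (le_of_eq hdG) hdGn)
  have hcond : ∀ w : Fin (n - G.natDegree) → F,
      (∀ j, (w j) ^ q = w j) ↔
        (∀ j, ((eG w : Fin n → F) j) ^ q = (eG w : Fin n → F) j) := by
    intro w
    constructor
    · intro hw j
      have hwfix : Polynomial.map (φi 1) (G * wordPoly w) = G * wordPoly w := by
        rw [Polynomial.map_mul, hGfix, hfixword _ w hw]
      rw [(heG w).1 j]
      have h4 := congrArg (fun P : F[X] => P.coeff (j : ℕ)) hwfix
      simp only [Polynomial.coeff_map] at h4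
      calc ((G * wordPoly w).coeff (j : ℕ)) ^ q
          = φi 1 ((G * wordPoly w).coeff (j : ℕ)) := by rw [hφi, pow_one]
        _ = (G * wordPoly w).coeff (j : ℕ) := h4
    · intro hu j
      have h1 : Polynomial.map (φi 1) (G * wordPoly w) = G * wordPoly w := by
        rw [← (heG w).2]
        exact hfixword n _ hu
      rw [Polynomial.map_mul, hGfix] at h1
      have h2 : Polynomial.map (φi 1) (wordPoly w) = wordPoly w := mul_left_cancel₀ hGne h1
      have h3 := congrArg (fun P : F[X] => P.coeff ((j : Fin (n - G.natDegree)) : ℕ)) h2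
      simp only [Polynomial.coeff_map, wp_coeff'] at h3
      calc (w j) ^ q = φi 1 (w j) := by rw [hφi, pow_one]
        _ = w j := h3
  have cardCK : Nat.card {u : Fin n → F // g ∣ wordPoly u ∧ ∀ j, (u j) ^ q = u j}
      = q ^ (n - r * g.natDegree) := by
    have e1 : {u : Fin n → F // g ∣ wordPoly u ∧ ∀ j, (u j) ^ q = u j}
        ≃ {u : Fin n → F // G ∣ wordPoly u ∧ ∀ j, (u j) ^ q = u j} := by
      refine Equiv.subtypeEquivRight (fun u => ?_)
      constructor
      · rintro ⟨h1, h2⟩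
        exact ⟨(hGdvdIff u h2).mp h1, h2⟩
      · rintro ⟨h1, h2⟩
        exact ⟨(hGdvdIff u h2).mpr h1, h2⟩
    have e2 := Equiv.subtypeSubtypeEquivSubtypeInter
      (fun u : Fin n → F => G ∣ wordPoly u) (fun u => ∀ j, (u j) ^ q = u j)
    have e3 : {w : Fin (n - G.natDegree) → F // ∀ j, (w j) ^ q = w j}
        ≃ {x : {u : Fin n → F // G ∣ wordPoly u} //
            ∀ j, ((x : Fin n → F) j) ^ q = (x : Fin n → F) j} :=
      Equiv.subtypeEquiv eG hcond
    have e4 : {w : Fin (n - G.natDegree) → F // ∀ j, (w j) ^ q = w j}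
        ≃ (Fin (n - G.natDegree) → {x : F // x ^ q = x}) :=
      Equiv.subtypePiEquivPi (p := fun _ (b : F) => b ^ q = b)
    calc Nat.card {u : Fin n → F // g ∣ wordPoly u ∧ ∀ j, (u j) ^ q = u j}
        = Nat.card (Fin (n - G.natDegree) → {x : F // x ^ q = x}) :=
          Nat.card_congr ((e1.trans (e2.symm.trans e3.symm)).trans e4)
      _ = q ^ (n - r * g.natDegree) := by
          rw [Nat.card_fun, cardK, Nat.card_eq_fintype_card (α := Fin (n - G.natDegree)),
            Fintype.card_fin, hdG]
  -- the vector-level map and the code subgroup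
  set Ψ : (Fin n → F) →+ (Fin n → F) :=
    { toFun := fun u j => ψs (u j)
      map_zero' := by funext j; simp
      map_add' := by intro u v; funext j; simp } with hΨdef
  set Csub : AddSubgroup (Fin n → F) :=
    { carrier := {u | g ∣ wordPoly u}
      add_mem' := fun {a b} ha hb => by
        simp only [Set.mem_setOf_eq] at *
        rw [wp_add]
        exact dvd_add ha hb
      zero_mem' := by
        simp only [Set.mem_setOf_eq]
        rw [wp_zero]
        exact dvd_zero g
      neg_mem' := fun {a} ha => by
        simp only [Set.mem_setOf_eq] at *
        rw [wp_neg]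
        exact dvd_neg.mpr ha } with hCdef
  have himg : {v : Fin n → F | ∃ u : Fin n → F, g ∣ wordPoly u ∧ v = fun j => (u j) ^ q - u j}
      = Ψ '' (Csub : Set (Fin n → F)) := by
    ext v
    constructor
    · rintro ⟨u, hu, rfl⟩
      exact ⟨u, hu, by funext j; rw [hΨdef]; simp [hψs]⟩
    · rintro ⟨u, hu, rfl⟩
      exact ⟨u, hu, by funext j; rw [hΨdef]; simp [hψs]⟩
  have hcnt := card_image_addhom Ψ Csub
  have hCc : Nat.card ↥Csub = (q ^ r) ^ (n - g.natDegree) := by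
    rw [← cardC]
    exact Nat.card_congr (Equiv.subtypeEquivRight (fun u => Iff.rfl))
  have hKc : Nat.card {x : Fin n → F // x ∈ Csub ∧ Ψ x = 0} = q ^ (n - r * g.natDegree) := by
    rw [← cardCK]
    refine Nat.card_congr (Equiv.subtypeEquivRight (fun u => ?_))
    constructor
    · rintro ⟨h1, h2⟩
      refine ⟨h1, fun j => ?_⟩
      have h3 := congrFun h2 j
      rw [hΨdef] at h3
      simp only [AddMonoidHom.coe_mk, ZeroHom.coe_mk, Pi.zero_apply] at h3
      rw [hψs] at h3
      exact sub_eq_zero.mp h3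
    · rintro ⟨h1, h2⟩
      refine ⟨h1, funext fun j => ?_⟩
      rw [hΨdef]
      simp only [AddMonoidHom.coe_mk, ZeroHom.coe_mk, Pi.zero_apply]
      rw [hψs]
      exact sub_eq_zero.mpr (h2 j)
  rw [← himg, hCc, hKc] at hcnt
  have cardS : {v : Fin n → F | ∃ u : Fin n → F, g ∣ wordPoly u ∧
      v = fun j => (u j) ^ q - u j}.ncard = q ^ ((r - 1) * n) := by
    rw [← Nat.card_coe_set_eq]
    exact arith_aux q r n g.natDegree _ hq2 hr.le hdGn hcnt
  refine ⟨?_, cardS⟩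
  have hsub : {v : Fin n → F | ∃ u : Fin n → F, g ∣ wordPoly u ∧
        v = fun j => (u j) ^ q - u j}
      ⊆ {v : Fin n → F | ∀ j, ∑ i ∈ Finset.range r, (v j) ^ (q ^ i) = 0} := by
    rintro v ⟨u, hu, rfl⟩ j
    exact hTr (u j)
  have cardT : {v : Fin n → F | ∀ j, ∑ i ∈ Finset.range r, (v j) ^ (q ^ i) = 0}.ncard
      = q ^ ((r - 1) * n) := by
    rw [← Nat.card_coe_set_eq]
    have e5 : ↥{v : Fin n → F | ∀ j, ∑ i ∈ Finset.range r, (v j) ^ (q ^ i) = 0}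
        ≃ (Fin n → {x : F // ∑ i ∈ Finset.range r, x ^ q ^ i = 0}) :=
      Equiv.subtypePiEquivPi (p := fun _ (b : F) => ∑ i ∈ Finset.range r, b ^ q ^ i = 0)
    rw [Nat.card_congr e5, Nat.card_fun, cardTr,
      Nat.card_eq_fintype_card (α := Fin n), Fintype.card_fin, ← pow_mul]
  exact Set.eq_of_subset_of_ncard_le hsub (by rw [cardS, cardT]) (Set.toFinite _)
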